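/- The Oseen tensor U satisfies the Lipschitz-type estimate |U(x) − U(y)| ≤ C|x−y|(1/|x|² + 1/|y|²) for all x, y ∈ ℝ³ \ {0}, for some constant C > 0. -/

import Mathlib

open scoped RealInnerProductSpace

/-- The Oseen tensor `U(x) = (1/(8π|x|))(Id + (x⊗x)/|x|²)`, viewed as the linear map
`v ↦ U(x) v` on `ℝ³`. -/
noncomputable def oseen (x v : EuclideanSpace ℝ (Fin 3)) : EuclideanSpace ℝ (Fin 3) :=
  (1 / (8 * Real.pi * ‖x‖)) • (v + (⟪x, v⟫ / ‖x‖ ^ 2) • x)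

lemma oseen_eq (x v : EuclideanSpace ℝ (Fin 3)) (hx : x ≠ 0) :
    oseen x v = (1 / (8 * Real.pi * ‖x‖)) • (v + ⟪‖x‖⁻¹ • x, v⟫ • (‖x‖⁻¹ • x)) := by
  have h : ‖x‖ ≠ 0 := norm_ne_zero_iff.mpr hx
  unfold oseen
  rw [real_inner_smul_left, smul_smul]
  congr 3
  generalize ⟪x, v⟫ = c
  field_simp

lemma proj_diff {E : Type*} [NormedAddCommGroup E] [InnerProductSpace ℝ E]
    (u w v : E) (hu : ‖u‖ = 1) (hw : ‖w‖ = 1) :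
    ‖⟪u,v⟫ • u - ⟪w,v⟫ • w‖ ≤ 2 * ‖u - w‖ * ‖v‖ := by
  have h : ⟪u,v⟫ • u - ⟪w,v⟫ • w = ⟪u - w, v⟫ • u + ⟪w,v⟫ • (u - w) := by
    rw [inner_sub_left]; module
  rw [h]
  calc ‖⟪u - w, v⟫ • u + ⟪w,v⟫ • (u - w)‖
      ≤ ‖⟪u - w, v⟫ • u‖ + ‖⟪w,v⟫ • (u - w)‖ := norm_add_le _ _
    _ = |⟪u - w, v⟫| * ‖u‖ + |⟪w,v⟫| * ‖u - w‖ := by rw [norm_smul, norm_smul]; rfl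
    _ ≤ ‖u - w‖ * ‖v‖ * 1 + ‖w‖ * ‖v‖ * ‖u - w‖ := by
        gcongr
        · exact abs_real_inner_le_norm _ _
        · exact hu.le
        · exact abs_real_inner_le_norm _ _
    _ = 2 * ‖u - w‖ * ‖v‖ := by rw [hw]; ring

lemma unit_diff {E : Type*} [NormedAddCommGroup E] [InnerProductSpace ℝ E]
    (x y : E) (hx : x ≠ 0) (hy : y ≠ 0) :
    ‖‖x‖⁻¹ • x - ‖y‖⁻¹ • y‖ ≤ 2 * ‖x - y‖ / ‖x‖ := by
  have hnx : (0:ℝ) < ‖x‖ := norm_pos_iff.mpr hx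
  have hny : (0:ℝ) < ‖y‖ := norm_pos_iff.mpr hy
  have h : ‖x‖⁻¹ • x - ‖y‖⁻¹ • y = ‖x‖⁻¹ • (x - y) + (‖x‖⁻¹ - ‖y‖⁻¹) • y := by module
  rw [h]
  have h3 : |‖y‖ - ‖x‖| ≤ ‖x - y‖ := by
    rw [abs_sub_comm]; exact abs_norm_sub_norm_le x y
  have h2 : ‖(‖x‖⁻¹ - ‖y‖⁻¹) • y‖ ≤ ‖x - y‖ / ‖x‖ := by
    rw [norm_smul, Real.norm_eq_abs]
    have e1 : ‖x‖⁻¹ - ‖y‖⁻¹ = (‖y‖ - ‖x‖) / (‖x‖ * ‖y‖) := by field_simp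
    rw [e1, abs_div, abs_of_pos (mul_pos hnx hny)]
    calc |‖y‖ - ‖x‖| / (‖x‖ * ‖y‖) * ‖y‖
        ≤ ‖x - y‖ / (‖x‖ * ‖y‖) * ‖y‖ := by gcongr
      _ = ‖x - y‖ / ‖x‖ := by field_simp
  have h1 : ‖‖x‖⁻¹ • (x - y)‖ = ‖x - y‖ / ‖x‖ := by
    rw [norm_smul, Real.norm_eq_abs, abs_of_pos (by positivity), inv_mul_eq_div]
  calc ‖‖x‖⁻¹ • (x - y) + (‖x‖⁻¹ - ‖y‖⁻¹) • y‖
      ≤ ‖‖x‖⁻¹ • (x - y)‖ + ‖(‖x‖⁻¹ - ‖y‖⁻¹) • y‖ := norm_add_le _ _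
    _ ≤ ‖x - y‖ / ‖x‖ + ‖x - y‖ / ‖x‖ := by rw [h1]; gcongr
    _ = 2 * ‖x - y‖ / ‖x‖ := by ring

/-- The Oseen tensor satisfies the Lipschitz-type operator-norm estimate
`|U(x) − U(y)| ≤ C |x−y| (1/|x|² + 1/|y|²)` for `x, y ∈ ℝ³ \ {0}`. -/
theorem oseen_lipschitz_bound :
    ∃ C : ℝ, 0 < C ∧ ∀ x y : EuclideanSpace ℝ (Fin 3), x ≠ 0 → y ≠ 0 →
      ∀ v : EuclideanSpace ℝ (Fin 3),
        ‖oseen x v - oseen y v‖ ≤ C * ‖x - y‖ * (1 / ‖x‖ ^ 2 + 1 / ‖y‖ ^ 2) * ‖v‖ := by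

  refine ⟨1, one_pos, ?_⟩
  intro x y hx hy v
  have hnx : (0:ℝ) < ‖x‖ := norm_pos_iff.mpr hx
  have hny : (0:ℝ) < ‖y‖ := norm_pos_iff.mpr hy
  have hnx' : ‖x‖ ≠ 0 := hnx.ne'
  have hny' : ‖y‖ ≠ 0 := hny.ne'
  have hpi : (3:ℝ) < Real.pi := Real.pi_gt_three
  have hpi0 : Real.pi ≠ 0 := by positivity
  set u := ‖x‖⁻¹ • x with hu_def
  set w := ‖y‖⁻¹ • y with hw_def
  have hu : ‖u‖ = 1 := norm_smul_inv_norm hx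
  have hw : ‖w‖ = 1 := norm_smul_inv_norm hy
  have key : oseen x v - oseen y v
      = ((1/(8*Real.pi*‖x‖)) - (1/(8*Real.pi*‖y‖))) • (v + ⟪u,v⟫ • u)
        + (1/(8*Real.pi*‖y‖)) • ((⟪u,v⟫ • u) - (⟪w,v⟫ • w)) := by
    rw [oseen_eq x v hx, oseen_eq y v hy]; module
  have b1 : ‖v + ⟪u,v⟫ • u‖ ≤ 2 * ‖v‖ := by
    calc ‖v + ⟪u,v⟫ • u‖ ≤ ‖v‖ + ‖⟪u,v⟫ • u‖ := norm_add_le _ _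
      _ ≤ ‖v‖ + ‖v‖ := by
          gcongr
          rw [norm_smul, Real.norm_eq_abs, hu, mul_one]
          calc |⟪u,v⟫| ≤ ‖u‖ * ‖v‖ := abs_real_inner_le_norm _ _
            _ = ‖v‖ := by rw [hu, one_mul]
      _ = 2 * ‖v‖ := by ring
  have b2 : |1/(8*Real.pi*‖x‖) - 1/(8*Real.pi*‖y‖)| ≤ ‖x-y‖ / (8*Real.pi*‖x‖*‖y‖) := by
    have e1 : 1/(8*Real.pi*‖x‖) - 1/(8*Real.pi*‖y‖)
        = (‖y‖ - ‖x‖) / (8*Real.pi*‖x‖*‖y‖) := by field_simp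
    rw [e1, abs_div, abs_of_pos (by positivity : (0:ℝ) < 8*Real.pi*‖x‖*‖y‖)]
    gcongr
    rw [abs_sub_comm]
    exact abs_norm_sub_norm_le x y
  have b3 : ‖u - w‖ ≤ 2 * ‖x - y‖ / ‖x‖ := unit_diff x y hx hy
  have bB : ‖⟪u,v⟫ • u - ⟪w,v⟫ • w‖ ≤ 2 * (2 * ‖x - y‖ / ‖x‖) * ‖v‖ := by
    refine le_trans (proj_diff u w v hu hw) ?_
    gcongr
  have hb : |1/(8*Real.pi*‖y‖)| = 1/(8*Real.pi*‖y‖) := abs_of_pos (by positivity)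
  have am : 2/(‖x‖*‖y‖) ≤ 1/‖x‖^2 + 1/‖y‖^2 := by
    have h := sq_nonneg (1/‖x‖ - 1/‖y‖)
    have e : (1/‖x‖ - 1/‖y‖)^2 = 1/‖x‖^2 + 1/‖y‖^2 - 2/(‖x‖*‖y‖) := by
      field_simp; ring
    rw [e] at h; linarith
  have cmp : 6/(8*Real.pi*‖x‖*‖y‖) ≤ 1/‖x‖^2 + 1/‖y‖^2 := by
    refine le_trans ?_ am
    rw [div_le_div_iff₀ (by positivity) (by positivity)]
    nlinarith [mul_pos hnx hny]
  calc ‖oseen x v - oseen y v‖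
      = ‖((1/(8*Real.pi*‖x‖)) - (1/(8*Real.pi*‖y‖))) • (v + ⟪u,v⟫ • u)
          + (1/(8*Real.pi*‖y‖)) • ((⟪u,v⟫ • u) - (⟪w,v⟫ • w))‖ := by rw [key]
    _ ≤ ‖((1/(8*Real.pi*‖x‖)) - (1/(8*Real.pi*‖y‖))) • (v + ⟪u,v⟫ • u)‖
          + ‖(1/(8*Real.pi*‖y‖)) • ((⟪u,v⟫ • u) - (⟪w,v⟫ • w))‖ := norm_add_le _ _
    _ = |1/(8*Real.pi*‖x‖) - 1/(8*Real.pi*‖y‖)| * ‖v + ⟪u,v⟫ • u‖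
          + (1/(8*Real.pi*‖y‖)) * ‖⟪u,v⟫ • u - ⟪w,v⟫ • w‖ := by
        rw [norm_smul, norm_smul, Real.norm_eq_abs, Real.norm_eq_abs, hb]
    _ ≤ (‖x-y‖ / (8*Real.pi*‖x‖*‖y‖)) * (2 * ‖v‖)
          + (1/(8*Real.pi*‖y‖)) * (2 * (2 * ‖x - y‖ / ‖x‖) * ‖v‖) := by
        gcongr
    _ = ‖x-y‖ * (6/(8*Real.pi*‖x‖*‖y‖)) * ‖v‖ := by field_simp; ring
    _ ≤ ‖x-y‖ * (1/‖x‖^2 + 1/‖y‖^2) * ‖v‖ := by gcongr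
    _ = 1 * ‖x - y‖ * (1/‖x‖^2 + 1/‖y‖^2) * ‖v‖ := by ring
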